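/- Let G be a 2-edge-connected finite graph (multiple edges allowed, no loops) that is not a regular bipartite graph, let w be a vertex of G, and let λ ∈ {0,1}. Then G has a spanning weakly even (w,λ)-tree, i.e., a spanning tree T such that in the bipartition of T in which w lies in the part of type λ, every leaf of T whose degree in G equals the maximum degree Δ(G) lies in the type-0 part. -/

import Mathlib

set_option linter.unusedSectionVars false
set_option maxHeartbeats 1000000


/-- A multigraph on vertex type `V` with edge type `E`: each edge is assigned an
unordered pair of distinct endpoints (multiple edges allowed, no loops). -/
structure Multigraph (V : Type) (E : Type) where
  inc : E → Sym2 V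
  loopless : ∀ e : E, ¬ (inc e).IsDiag

namespace Multigraph

variable {V E : Type}

/-- `u` and `v` are joined by an edge belonging to the edge set `S`. -/
def AdjOn (G : Multigraph V E) (S : Set E) (u v : V) : Prop :=
  ∃ e ∈ S, G.inc e = s(u, v)

/-- `v` is reachable from `u` using edges in `S`. -/
def ReachOn (G : Multigraph V E) (S : Set E) (u v : V) : Prop :=
  Relation.ReflTransGen (G.AdjOn S) u v

/-- `G` is connected. -/
def Connected (G : Multigraph V E) : Prop :=
  Nonempty V ∧ ∀ u v : V, G.ReachOn Set.univ u v

/-- The degree of `v` in the spanning subgraph with edge set `S`. -/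
noncomputable def degOn (G : Multigraph V E) (S : Set E) (v : V) : ℕ :=
  {e ∈ S | v ∈ G.inc e}.ncard

/-- The degree of `v` in `G`. -/
noncomputable def degree (G : Multigraph V E) (v : V) : ℕ :=
  G.degOn Set.univ v

/-- The maximum degree `Δ(G)`. -/
noncomputable def maxDegree (G : Multigraph V E) [Fintype V] : ℕ :=
  Finset.univ.sup G.degree

/-- `G` is regular. -/
def IsRegular (G : Multigraph V E) : Prop :=
  ∃ r : ℕ, ∀ v : V, G.degree v = r

/-- The 2-colouring `c` is proper on the edge set `S`: the two endpoints of any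
edge of `S` receive different colours. -/
def ProperOn (G : Multigraph V E) (S : Set E) (c : V → Bool) : Prop :=
  ∀ e ∈ S, ∀ u v : V, G.inc e = s(u, v) → c u ≠ c v

/-- `G` is bipartite. -/
def IsBipartite (G : Multigraph V E) : Prop :=
  ∃ c : V → Bool, G.ProperOn Set.univ c

/-- The sub-multigraph of `G` with vertex set `U` and edge set `S` is a tree:
`U` is nonempty, every edge of `S` joins vertices of `U`, any two vertices of `U`
are joined by a walk using edges of `S`, and there are exactly `|U| - 1` edges
(which forces acyclicity, and in particular forbids parallel edges in `S`). -/
structure IsTree (G : Multigraph V E) (U : Set V) (S : Set E) : Prop where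
  nonempty : U.Nonempty
  edges_in : ∀ e ∈ S, ∀ v : V, v ∈ G.inc e → v ∈ U
  conn : ∀ u ∈ U, ∀ v ∈ U, G.ReachOn S u v
  card_eq : S.ncard + 1 = U.ncard

/-- `v` is a leaf of the subgraph with edge set `S`. -/
def IsLeaf (G : Multigraph V E) (S : Set E) (v : V) : Prop :=
  G.degOn S v = 1

/-- `e` is a cutedge: after removing `e`, some pair of vertices is separated. -/
def IsCutedge (G : Multigraph V E) (e : E) : Prop :=
  ∃ u v : V, ¬ G.ReachOn {e}ᶜ u v

/-- `G` is 2-edge-connected: connected and without cutedges. -/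
def TwoEdgeConnected (G : Multigraph V E) : Prop :=
  G.Connected ∧ ∀ e : E, ¬ G.IsCutedge e

/-- The edge set `S` is a weak 2-factor of `G`: every vertex has degree at most
2 in `S` (equivalently, every component of the spanning subgraph is a path —
possibly a single vertex — or a cycle), and every vertex of degree less than 2
in `S` (i.e. every endvertex of a path component) has degree less than `Δ(G)`
in `G`. -/
def IsWeakTwoFactor (G : Multigraph V E) [Fintype V] (S : Set E) : Prop :=
  ∀ v : V, G.degOn S v ≤ 2 ∧ (G.degOn S v < 2 → G.degree v < G.maxDegree)

end Multigraph

namespace Multigraph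

variable {V E : Type}

section Basics

variable (G : Multigraph V E)

lemma exists_endpoints (e : E) : ∃ x y : V, x ≠ y ∧ G.inc e = s(x, y) := by
  obtain ⟨x, y, h⟩ : ∃ x y, G.inc e = s(x, y) :=
    Sym2.ind (f := fun z => ∃ x y, z = s(x, y)) (fun x y => ⟨x, y, rfl⟩) (G.inc e)
  refine ⟨x, y, fun hxy => G.loopless e ?_, h⟩
  rw [h, hxy]
  exact Sym2.mk_isDiag_iff.2 rfl

variable {G}

lemma AdjOn.symm {S : Set E} {u v : V} (h : G.AdjOn S u v) : G.AdjOn S v u := by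
  obtain ⟨e, he, hinc⟩ := h
  exact ⟨e, he, by rwa [Sym2.eq_swap]⟩

lemma adjOn_symmetric (S : Set E) : Symmetric (G.AdjOn S) := fun _ _ h => h.symm

lemma AdjOn.mono {S T : Set E} (hST : S ⊆ T) {u v : V} (h : G.AdjOn S u v) : G.AdjOn T u v := by
  obtain ⟨e, he, hinc⟩ := h; exact ⟨e, hST he, hinc⟩

lemma ReachOn.refl {S : Set E} (u : V) : G.ReachOn S u u := Relation.ReflTransGen.refl

lemma ReachOn.symm {S : Set E} {u v : V} (h : G.ReachOn S u v) : G.ReachOn S v u :=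
  by
    induction h with
    | refl => exact Relation.ReflTransGen.refl
    | tail _ hbc ih => exact Relation.ReflTransGen.head hbc.symm ih

lemma ReachOn.trans {S : Set E} {u v z : V} (h : G.ReachOn S u v) (h' : G.ReachOn S v z) :
    G.ReachOn S u z := Relation.ReflTransGen.trans h h'

lemma ReachOn.mono {S T : Set E} (hST : S ⊆ T) {u v : V} (h : G.ReachOn S u v) :
    G.ReachOn T u v := Relation.ReflTransGen.mono (r := G.AdjOn S) (p := G.AdjOn T) (fun _ _ ha => ha.mono hST) u v h

lemma AdjOn.reachOn {S : Set E} {u v : V} (h : G.AdjOn S u v) : G.ReachOn S u v :=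
  Relation.ReflTransGen.single h

lemma reachOn_empty {u v : V} (h : G.ReachOn (∅ : Set E) u v) : u = v := by
  induction h with
  | refl => rfl
  | tail _ hbc _ => exact absurd hbc (by rintro ⟨e, he, -⟩; exact he)

/-- join lemma for inserting an edge -/
lemma reachOn_insert_iff {S : Set E} {e : E} {x y : V} (hxy : G.inc e = s(x, y)) {u v : V} :
    G.ReachOn (insert e S) u v ↔ G.ReachOn S u v ∨
      (G.ReachOn S u x ∧ G.ReachOn S y v) ∨ (G.ReachOn S u y ∧ G.ReachOn S x v) := by
  constructor
  · intro h
    induction h with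
    | refl => exact Or.inl (ReachOn.refl u)
    | tail _ hbc ih =>
      obtain ⟨e', he', hinc⟩ := hbc
      rcases Set.mem_insert_iff.1 he' with rfl | heS
      · have h2 : s(x, y) = _ := hxy ▸ hinc
        rcases Sym2.eq_iff.1 h2 with ⟨rfl, rfl⟩ | ⟨rfl, rfl⟩
        · -- second endpoint is y; b = x
          rcases ih with h1 | ⟨h1, h2'⟩ | ⟨h1, h2'⟩
          · exact Or.inr (Or.inl ⟨h1, ReachOn.refl _⟩)
          · exact Or.inr (Or.inl ⟨h1, ReachOn.refl _⟩)
          · exact Or.inl h1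
        · rcases ih with h1 | ⟨h1, h2'⟩ | ⟨h1, h2'⟩
          · exact Or.inr (Or.inr ⟨h1, ReachOn.refl _⟩)
          · exact Or.inl h1
          · exact Or.inr (Or.inr ⟨h1, ReachOn.refl _⟩)
      · -- edge in S
        have hadj : G.AdjOn S _ _ := ⟨e', heS, hinc⟩
        rcases ih with h1 | ⟨h1, h2'⟩ | ⟨h1, h2'⟩
        · exact Or.inl (h1.trans hadj.reachOn)
        · exact Or.inr (Or.inl ⟨h1, h2'.trans hadj.reachOn⟩)
        · exact Or.inr (Or.inr ⟨h1, h2'.trans hadj.reachOn⟩)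
  · intro h
    have hstep : G.ReachOn (insert e S) x y :=
      (AdjOn.reachOn ⟨e, Set.mem_insert e S, hxy⟩)
    have hmono : ∀ {a b : V}, G.ReachOn S a b → G.ReachOn (insert e S) a b :=
      fun h => h.mono (Set.subset_insert e S)
    rcases h with h1 | ⟨h1, h2⟩ | ⟨h1, h2⟩
    · exact hmono h1
    · exact ((hmono h1).trans hstep).trans (hmono h2)
    · exact ((hmono h1).trans hstep.symm).trans (hmono h2)

/-- extracting a crossing edge -/
lemma exists_crossing {Y : Set E} {u v : V} (h : G.ReachOn Y u v) (U : Set V)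
    (hu : u ∈ U) (hv : v ∉ U) :
    ∃ e ∈ Y, ∃ a b : V, G.inc e = s(a, b) ∧ a ∈ U ∧ b ∉ U := by
  induction h with
  | refl => exact absurd hu hv
  | @tail b c hub hbc ih =>
    by_cases hb : b ∈ U
    · obtain ⟨e, he, hinc⟩ := hbc
      exact ⟨e, he, b, c, hinc, hb, hv⟩
    · exact ih hb

lemma exists_unjoined {Y : Set E} {u v : V} (h : G.ReachOn Y u v) (S : Set E)
    (hns : ¬ G.ReachOn S u v) :
    ∃ e ∈ Y, ∃ a b : V, G.inc e = s(a, b) ∧ ¬ G.ReachOn S a b := by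
  induction h with
  | refl => exact absurd (ReachOn.refl u) hns
  | @tail b c hub hbc ih =>
    by_cases hb : G.ReachOn S u b
    · obtain ⟨e, he, hinc⟩ := hbc
      refine ⟨e, he, b, c, hinc, fun hbc' => hns (hb.trans hbc')⟩
    · exact ih hb

/-- closed sets swallow everything reachable -/
lemma mem_of_closed {U : Set V}
    (hcl : ∀ u ∈ U, ∀ (e : E) (a b : V), G.inc e = s(a, b) → a = u → b ∈ U)
    {u0 v : V} (h : G.ReachOn Set.univ u0 v) (hu0 : u0 ∈ U) : v ∈ U := by
  induction h with
  | refl => exact hu0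
  | @tail b c hub hbc ih =>
    obtain ⟨e, -, hinc⟩ := hbc
    exact hcl b ih e b c hinc rfl

end Basics

end Multigraph

namespace Multigraph

open Finset

section Rank

open scoped Classical

variable [Fintype V] [Fintype E] (G : Multigraph V E)

noncomputable def compF (S : Set E) (v : V) : Finset V :=
  Finset.univ.filter (fun u => G.ReachOn S v u)

noncomputable def CF (S : Set E) : Finset (Finset V) :=
  Finset.univ.image (G.compF S)

noncomputable def rho (S : Set E) : ℕ := Fintype.card V - (G.CF S).card

variable {G}

lemma mem_compF {S : Set E} {u v : V} : u ∈ G.compF S v ↔ G.ReachOn S v u := by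
  simp [compF]

lemma self_mem_compF {S : Set E} (v : V) : v ∈ G.compF S v := mem_compF.2 (ReachOn.refl v)

lemma compF_eq_of_reach {S : Set E} {u v : V} (h : G.ReachOn S v u) :
    G.compF S v = G.compF S u := by
  ext z
  simp only [mem_compF]
  exact ⟨fun hz => h.symm.trans hz, fun hz => h.trans hz⟩

lemma compF_eq_iff {S : Set E} {u v : V} :
    G.compF S v = G.compF S u ↔ G.ReachOn S v u := by
  refine ⟨fun h => ?_, compF_eq_of_reach⟩
  have : u ∈ G.compF S v := h ▸ self_mem_compF u
  exact mem_compF.1 this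

lemma compF_mem_CF (S : Set E) (v : V) : G.compF S v ∈ G.CF S :=
  Finset.mem_image_of_mem _ (Finset.mem_univ v)

lemma mem_CF {S : Set E} {K : Finset V} : K ∈ G.CF S ↔ ∃ v, G.compF S v = K := by
  simp [CF]

lemma card_CF_le (S : Set E) : (G.CF S).card ≤ Fintype.card V :=
  le_trans Finset.card_image_le (by simp)

lemma card_CF_pos [Nonempty V] (S : Set E) : 0 < (G.CF S).card :=
  Finset.card_pos.2 ⟨_, compF_mem_CF S (Classical.arbitrary V)⟩

lemma CF_disjoint {S : Set E} {K K' : Finset V} (hK : K ∈ G.CF S) (hK' : K' ∈ G.CF S)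
    (hne : K ≠ K') : Disjoint K K' := by
  obtain ⟨v, rfl⟩ := mem_CF.1 hK
  obtain ⟨u, rfl⟩ := mem_CF.1 hK'
  refine Finset.disjoint_left.2 fun {z} hz hz' => hne ?_
  rw [compF_eq_of_reach (mem_compF.1 hz)]
  rw [compF_eq_of_reach (mem_compF.1 hz')]

/-- the class count is unchanged upon inserting an edge whose ends are joined -/
lemma CF_insert_of_reach {S : Set E} {e : E} {x y : V} (hxy : G.inc e = s(x, y))
    (hr : G.ReachOn S x y) : G.CF (insert e S) = G.CF S := by
  have hcomp : ∀ v, G.compF (insert e S) v = G.compF S v := by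
    intro v
    ext u
    simp only [mem_compF]
    rw [reachOn_insert_iff hxy]
    constructor
    · rintro (h | ⟨h1, h2⟩ | ⟨h1, h2⟩)
      · exact h
      · exact (h1.trans hr).trans h2
      · exact (h1.trans hr.symm).trans h2
    · exact Or.inl
  unfold CF
  exact Finset.image_congr (fun v _ => hcomp v)

/-- inserting an edge with unjoined ends merges exactly two classes -/
lemma card_CF_insert_of_not_reach {S : Set E} {e : E} {x y : V} (hxy : G.inc e = s(x, y))
    (hr : ¬ G.ReachOn S x y) :
    (G.CF (insert e S)).card + 1 = (G.CF S).card := by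
  set Kx := G.compF S x with hKx
  set Ky := G.compF S y with hKy
  have hKne : Kx ≠ Ky := fun h => hr (compF_eq_iff.1 h)
  set T : Finset (Finset V) := ((G.CF S).erase Kx).erase Ky with hT
  -- membership facts
  have hxmem : Kx ∈ G.CF S := compF_mem_CF S x
  have hymem : Ky ∈ G.CF S := compF_mem_CF S y
  have hymem' : Ky ∈ (G.CF S).erase Kx := Finset.mem_erase.2 ⟨hKne.symm, hymem⟩
  have hx_not_T : ∀ K ∈ T, x ∉ K := by
    intro K hK hxK
    have hKmem : K ∈ G.CF S := Finset.mem_of_mem_erase (Finset.mem_of_mem_erase hK)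
    obtain ⟨v, rfl⟩ := mem_CF.1 hKmem
    have : G.compF S v = Kx := compF_eq_of_reach (mem_compF.1 hxK)
    exact (Finset.mem_erase.1 (Finset.mem_of_mem_erase hK)).1 this
  have hy_not_T : ∀ K ∈ T, y ∉ K := by
    intro K hK hyK
    have hKmem : K ∈ G.CF S := Finset.mem_of_mem_erase (Finset.mem_of_mem_erase hK)
    obtain ⟨v, rfl⟩ := mem_CF.1 hKmem
    have : G.compF S v = Ky := compF_eq_of_reach (mem_compF.1 hyK)
    exact (Finset.mem_erase.1 hK).1 this
  -- new classes
  have hcomp1 : ∀ v, (G.ReachOn S v x ∨ G.ReachOn S v y) →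
      G.compF (insert e S) v = Kx ∪ Ky := by
    intro v hv
    ext u
    simp only [mem_compF, Finset.mem_union, hKx, hKy]
    rw [reachOn_insert_iff hxy]
    constructor
    · rintro (h | ⟨h1, h2⟩ | ⟨h1, h2⟩)
      · rcases hv with hv | hv
        · exact Or.inl (hv.symm.trans h)
        · exact Or.inr (hv.symm.trans h)
      · exact Or.inr h2
      · exact Or.inl h2
    · rintro (h | h)
      · rcases hv with hv | hv
        · exact Or.inl (hv.trans h)
        · exact Or.inr (Or.inr ⟨hv, h⟩)
      · rcases hv with hv | hv
        · exact Or.inr (Or.inl ⟨hv, h⟩)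
        · exact Or.inl (hv.trans h)
  have hcomp2 : ∀ v, ¬(G.ReachOn S v x ∨ G.ReachOn S v y) →
      G.compF (insert e S) v = G.compF S v := by
    intro v hv
    push_neg at hv
    ext u
    simp only [mem_compF]
    rw [reachOn_insert_iff hxy]
    constructor
    · rintro (h | ⟨h1, h2⟩ | ⟨h1, h2⟩)
      · exact h
      · exact absurd h1 hv.1
      · exact absurd h1 hv.2
    · exact Or.inl
  -- CF (insert e S) = insert (Kx ∪ Ky) T
  have hCF' : G.CF (insert e S) = insert (Kx ∪ Ky) T := by
    apply Finset.ext
    intro K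
    simp only [mem_CF, Finset.mem_insert]
    constructor
    · rintro ⟨v, rfl⟩
      by_cases hv : G.ReachOn S v x ∨ G.ReachOn S v y
      · exact Or.inl (hcomp1 v hv)
      · refine Or.inr ?_
        rw [hcomp2 v hv]
        push_neg at hv
        refine Finset.mem_erase.2 ⟨?_, Finset.mem_erase.2 ⟨?_, compF_mem_CF S v⟩⟩
        · exact fun h => hv.2 (compF_eq_iff.1 h)
        · exact fun h => hv.1 (compF_eq_iff.1 h)
    · rintro (rfl | hK)
      · exact ⟨x, hcomp1 x (Or.inl (ReachOn.refl x))⟩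
      · obtain ⟨v, rfl⟩ := mem_CF.1 (Finset.mem_of_mem_erase (Finset.mem_of_mem_erase hK))
        refine ⟨v, hcomp2 v ?_⟩
        push_neg
        constructor
        · exact fun h => hx_not_T _ hK (mem_compF.2 h)
        · exact fun h => hy_not_T _ hK (mem_compF.2 h)
  have hKxy_not_T : Kx ∪ Ky ∉ T := by
    intro h
    exact hx_not_T _ h (Finset.mem_union_left _ (self_mem_compF x))
  have hTcard : T.card + 2 = (G.CF S).card := by
    rw [hT]
    rw [Finset.card_erase_of_mem hymem', Finset.card_erase_of_mem hxmem]
    have h1 : 1 ≤ (G.CF S).card := Finset.card_pos.2 ⟨Kx, hxmem⟩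
    have h2 : 2 ≤ (G.CF S).card := by
      have := Finset.one_lt_card.2 ⟨Kx, hxmem, Ky, hymem, hKne⟩
      omega
    omega
  rw [hCF', Finset.card_insert_of_notMem hKxy_not_T]
  omega

end Rank

end Multigraph

namespace Multigraph

open Finset

section Rank2

open scoped Classical

variable [Fintype V] [Fintype E] {G : Multigraph V E}

lemma rho_insert_of_reach {S : Set E} {e : E} {x y : V} (hxy : G.inc e = s(x, y))
    (hr : G.ReachOn S x y) : G.rho (insert e S) = G.rho S := by
  unfold rho; rw [CF_insert_of_reach hxy hr]

lemma rho_insert_of_not_reach {S : Set E} {e : E} {x y : V} (hxy : G.inc e = s(x, y))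
    (hr : ¬ G.ReachOn S x y) : G.rho (insert e S) = G.rho S + 1 := by
  unfold rho
  have h1 := card_CF_insert_of_not_reach hxy hr
  have h2 := card_CF_le (G := G) S
  omega

lemma rho_le_insert (S : Set E) (e : E) : G.rho S ≤ G.rho (insert e S) := by
  obtain ⟨x, y, hne, hxy⟩ := G.exists_endpoints e
  by_cases hr : G.ReachOn S x y
  · rw [rho_insert_of_reach hxy hr]
  · rw [rho_insert_of_not_reach hxy hr]; omega

lemma rho_insert_le (S : Set E) (e : E) : G.rho (insert e S) ≤ G.rho S + 1 := by
  obtain ⟨x, y, hne, hxy⟩ := G.exists_endpoints e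
  by_cases hr : G.ReachOn S x y
  · rw [rho_insert_of_reach hxy hr]; omega
  · rw [rho_insert_of_not_reach hxy hr]

lemma rho_le_union (S X : Set E) : G.rho S ≤ G.rho (S ∪ X) := by
  refine Set.Finite.induction_on (motive := fun X _ => G.rho S ≤ G.rho (S ∪ X)) X
    (Set.toFinite X) (by simp) ?_
  intro a X' ha hfin ih
  have hins : S ∪ insert a X' = insert a (S ∪ X') := by
    rw [Set.union_insert]
  rw [hins]
  exact le_trans ih (rho_le_insert _ a)

lemma rho_mono {S T : Set E} (h : S ⊆ T) : G.rho S ≤ G.rho T := by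
  have := rho_le_union (G := G) S (T \ S)
  rwa [Set.union_diff_cancel h] at this

lemma rho_empty : G.rho (∅ : Set E) = 0 := by
  unfold rho CF
  have hcomp : ∀ v : V, G.compF (∅ : Set E) v = {v} := by
    intro v
    ext u
    simp only [mem_compF, Finset.mem_singleton]
    constructor
    · intro h
      exact (G.reachOn_empty h).symm
    · rintro rfl
      exact ReachOn.refl u
  rw [Finset.image_congr (fun v _ => hcomp v)]
  rw [Finset.card_image_of_injective _ (fun a b h => Finset.singleton_injective h)]
  simp

lemma rho_le_ncard (S : Set E) : G.rho S ≤ S.ncard := by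
  refine Set.Finite.induction_on (motive := fun S _ => G.rho S ≤ S.ncard) S
    (Set.toFinite S) (by simp [rho_empty]) ?_
  intro a X' ha hfin ih
  calc G.rho (insert a X') ≤ G.rho X' + 1 := rho_insert_le X' a
  _ ≤ X'.ncard + 1 := by omega
  _ = (insert a X').ncard := (Set.ncard_insert_of_notMem ha hfin).symm

lemma rho_submod (X Y : Set E) : G.rho (X ∪ Y) + G.rho (X ∩ Y) ≤ G.rho X + G.rho Y := by
  generalize hk : (Y \ X).ncard = k
  induction k generalizing Y with
  | zero =>
    have hYX : Y ⊆ X := by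
      rw [Set.ncard_eq_zero (Set.toFinite _)] at hk
      exact Set.diff_eq_empty.1 hk
    rw [Set.union_eq_self_of_subset_right hYX, Set.inter_eq_self_of_subset_right hYX]
    try omega
  | succ k ih =>
    have hne : (Y \ X).Nonempty := Set.nonempty_of_ncard_ne_zero (by omega)
    obtain ⟨e, heY, heX⟩ := hne
    set Y' := Y \ {e} with hY'
    have hYins : Y = insert e Y' := by
      rw [hY', Set.insert_diff_singleton, Set.insert_eq_self.2 heY]
    have hk' : (Y' \ X).ncard = k := by
      have heq : Y' \ X = (Y \ X) \ {e} := by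
        rw [hY']; ext z; simp; tauto
      have hk2 : ((Y \ X) \ {e}).ncard = (Y \ X).ncard - 1 :=
        Set.ncard_diff_singleton_of_mem (s := Y \ X) ⟨heY, heX⟩
      rw [heq, hk2, hk]
      omega
    have hXY : X ∪ Y = insert e (X ∪ Y') := by
      rw [hYins, Set.union_insert]
    have hXint : X ∩ Y = X ∩ Y' := by
      rw [hYins]; ext z; simp; intro h1 h2; subst h2; exact absurd h1 heX
    have ihY := ih Y' hk'
    obtain ⟨x, y, hne', hxy⟩ := G.exists_endpoints e
    by_cases hr : G.ReachOn (X ∪ Y') x y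
    · rw [hXY, rho_insert_of_reach hxy hr, hXint]
      have h2 : G.rho Y' ≤ G.rho Y := by rw [hYins]; exact rho_le_insert Y' e
      omega
    · have hr2 : ¬ G.ReachOn Y' x y := fun h => hr (h.mono Set.subset_union_right)
      rw [hXY, rho_insert_of_not_reach hxy hr, hXint, hYins,
        rho_insert_of_not_reach hxy hr2]
      omega

end Rank2

end Multigraph

namespace Multigraph

open Finset

section Rank3

open scoped Classical

variable [Fintype V] [Fintype E] {G : Multigraph V E}

lemma CF_biUnion (S : Set E) : (G.CF S).biUnion id = Finset.univ := by
  apply Finset.ext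
  intro v
  simp only [Finset.mem_biUnion, id, Finset.mem_univ, iff_true]
  exact ⟨G.compF S v, compF_mem_CF S v, self_mem_compF v⟩

lemma sum_CF_card (S : Set E) : ∑ K ∈ G.CF S, K.card = Fintype.card V := by
  have h := Finset.card_biUnion (s := G.CF S) (t := id)
    (fun K hK K' hK' hne => CF_disjoint hK hK' hne)
  rw [CF_biUnion] at h
  simpa using h.symm

lemma sum_CF_inter_card (S : Set E) (D : Finset V) :
    ∑ K ∈ G.CF S, (K ∩ D).card = D.card := by
  have h := Finset.card_biUnion (s := G.CF S) (t := fun K => K ∩ D)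
    (fun K hK K' hK' hne => Finset.disjoint_of_subset_left (Finset.inter_subset_left)
      (Finset.disjoint_of_subset_right (Finset.inter_subset_left) (CF_disjoint hK hK' hne)))
  have heq : (G.CF S).biUnion (fun K => K ∩ D) = D := by
    apply Finset.ext
    intro v
    simp only [Finset.mem_biUnion, Finset.mem_inter]
    constructor
    · rintro ⟨K, hK, hvK, hvD⟩; exact hvD
    · intro hv
      exact ⟨G.compF S v, compF_mem_CF S v, self_mem_compF v, hv⟩
  rw [heq] at h
  exact h.symm

lemma card_CF_of_conn (S : Set E) (hconn : ∀ u v : V, G.ReachOn S u v) [Nonempty V] :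
    (G.CF S).card = 1 := by
  obtain ⟨v0⟩ := ‹Nonempty V›
  have : G.CF S = {G.compF S v0} := by
    apply Finset.ext
    intro K
    simp only [mem_CF, Finset.mem_singleton]
    constructor
    · rintro ⟨v, rfl⟩
      exact (compF_eq_of_reach (hconn v0 v)).symm
    · rintro rfl
      exact ⟨v0, rfl⟩
  rw [this, Finset.card_singleton]

/-- a class is closed under adjacency within S -/
lemma compF_closed {S : Set E} {r v z : V} (hv : v ∈ G.compF S r) {e : E}
    (he : e ∈ S) (hinc : v ∈ G.inc e) (hz : z ∈ G.inc e) : z ∈ G.compF S r := by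
  obtain ⟨x, y, hne, hxy⟩ := G.exists_endpoints e
  rw [hxy, Sym2.mem_iff] at hinc hz
  have hadj : G.ReachOn S v z := by
    rcases hinc with rfl | rfl <;> rcases hz with rfl | rfl
    · exact ReachOn.refl _
    · exact (AdjOn.reachOn ⟨e, he, hxy⟩)
    · exact (AdjOn.reachOn ⟨e, he, hxy⟩).symm
    · exact ReachOn.refl _
  exact mem_compF.2 ((mem_compF.1 hv).trans hadj)

/-- spanning tree extension -/
lemma exists_spanning_tree_extending [Nonempty V] (H F : Set E) (hFH : F ⊆ H)
    (hH : ∀ u v : V, G.ReachOn H u v) (hind : G.rho F = F.ncard) :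
    ∃ S : Set E, F ⊆ S ∧ S ⊆ H ∧ G.IsTree Set.univ S := by
  generalize hm : (G.CF F).card = m
  induction m using Nat.strong_induction_on generalizing F with
  | _ m ih =>
  by_cases hconn : ∀ u v : V, G.ReachOn F u v
  · refine ⟨F, le_refl F, hFH, ?_⟩
    refine ⟨⟨Classical.arbitrary V, Set.mem_univ _⟩, fun e he v hv => Set.mem_univ v,
      fun u _ v _ => hconn u v, ?_⟩
    have h1 : (G.CF F).card = 1 := card_CF_of_conn F hconn
    have h2 : G.rho F = Fintype.card V - 1 := by unfold rho; rw [h1]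
    have h3 : 1 ≤ Fintype.card V := Fintype.card_pos
    rw [Set.ncard_univ, Nat.card_eq_fintype_card, ← hind, h2]
    omega
  · push_neg at hconn
    obtain ⟨u, v, huv⟩ := hconn
    obtain ⟨e, heH, a, b, hab, hnr⟩ := exists_unjoined (hH u v) F huv
    have heF : e ∉ F := fun heF => hnr (AdjOn.reachOn ⟨e, heF, hab⟩)
    have hrho : G.rho (insert e F) = G.rho F + 1 := rho_insert_of_not_reach hab hnr
    have hncard : (insert e F).ncard = F.ncard + 1 := Set.ncard_insert_of_notMem heF (Set.toFinite F)
    have hcard : (G.CF (insert e F)).card + 1 = (G.CF F).card := card_CF_insert_of_not_reach hab hnr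
    obtain ⟨S, hS1, hS2, hS3⟩ := ih (G.CF (insert e F)).card (by omega) (insert e F)
      (Set.insert_subset heH hFH) (by rw [hrho, hncard, hind]) rfl
    exact ⟨S, le_trans (Set.subset_insert e F) hS1, hS2, hS3⟩

end Rank3

end Multigraph


namespace Multigraph

open Finset

section Rado

open scoped Classical

variable [Fintype V] [Fintype E] {G : Multigraph V E}

lemma rado {ι : Type} [Nonempty E] (J : Finset ι) (K : ι → Set E)
    (hcond : ∀ J' ⊆ J, J'.card ≤ G.rho (⋃ j ∈ J', K j)) :
    ∃ φ : ι → E, (∀ j ∈ J, φ j ∈ K j) ∧ Set.InjOn φ ↑J ∧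
      G.rho (φ '' ↑J) = J.card ∧ (φ '' ↑J).ncard = J.card := by
  generalize hN : (∑ j ∈ J, (K j).ncard) = N
  induction N using Nat.strong_induction_on generalizing K with
  | _ N ih =>
  by_cases hbig : ∃ j0 ∈ J, 2 ≤ (K j0).ncard
  · obtain ⟨j0, hj0, hj0c⟩ := hbig
    have hx : ∃ x ∈ K j0, ∃ y ∈ K j0, x ≠ y := (Set.one_lt_ncard (Set.toFinite _)).1 (by omega)
    obtain ⟨x, hxK, y, hyK, hxyne⟩ := hx
    -- helper for the two deletions
    have hdel : ∀ z ∈ K j0, ∀ (K' : ι → Set E), K' = Function.update K j0 (K j0 \ {z}) →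
        ¬ (∀ J' ⊆ J, J'.card ≤ G.rho (⋃ j ∈ J', K' j)) →
        ∃ J1 : Finset ι, J1 ⊆ J.erase j0 ∧
          G.rho ((K j0 \ {z}) ∪ ⋃ j ∈ J1, K j) ≤ J1.card := by
      intro z hzK K' hK' hnc
      push_neg at hnc
      obtain ⟨J', hJ'sub, hJ'lt⟩ := hnc
      have hj0J' : j0 ∈ J' := by
        by_contra hj0J'
        have heq : ⋃ j ∈ J', K' j = ⋃ j ∈ J', K j := by
          apply Set.iUnion₂_congr
          intro j hj
          rw [hK']
          exact Function.update_of_ne (by rintro rfl; exact hj0J' hj) _ K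
        rw [heq] at hJ'lt
        exact absurd (hcond J' hJ'sub) (not_le.2 hJ'lt)
      refine ⟨J'.erase j0, Finset.erase_subset_erase j0 hJ'sub, ?_⟩
      have hsplit : ⋃ j ∈ J', K' j = (K j0 \ {z}) ∪ ⋃ j ∈ J'.erase j0, K j := by
        conv_lhs => rw [← Finset.insert_erase hj0J']
        rw [Finset.set_biUnion_insert]
        congr 1
        · rw [hK', Function.update_self]
        · apply Set.iUnion₂_congr
          intro j hj
          rw [hK']
          exact Function.update_of_ne (Finset.ne_of_mem_erase hj) _ K
      rw [hsplit] at hJ'lt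
      have hc : J'.card = (J'.erase j0).card + 1 := by
        rw [Finset.card_erase_of_mem hj0J']
        have : 1 ≤ J'.card := Finset.card_pos.2 ⟨j0, hj0J'⟩
        omega
      omega
    -- try deleting x
    set Kx : ι → Set E := Function.update K j0 (K j0 \ {x}) with hKxdef
    have hKxval : ∀ j ∈ J.erase j0, Kx j = K j := fun j hj => by
      rw [hKxdef]; exact Function.update_of_ne (Finset.ne_of_mem_erase hj) _ K
    set Ky : ι → Set E := Function.update K j0 (K j0 \ {y}) with hKydef
    have hKyval : ∀ j ∈ J.erase j0, Ky j = K j := fun j hj => by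
      rw [hKydef]; exact Function.update_of_ne (Finset.ne_of_mem_erase hj) _ K
    have hsumx : ∑ j ∈ J, (Kx j).ncard < N := by
      rw [← hN]
      rw [← Finset.add_sum_erase J _ hj0, ← Finset.add_sum_erase J (fun j => (K j).ncard) hj0]
      have h1 : (Kx j0).ncard = (K j0).ncard - 1 := by
        rw [hKxdef, Function.update_self]
        exact Set.ncard_diff_singleton_of_mem hxK
      have h2 : ∑ j ∈ J.erase j0, (Kx j).ncard = ∑ j ∈ J.erase j0, (K j).ncard :=
        Finset.sum_congr rfl (fun j hj => by rw [hKxval j hj])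
      omega
    have hsumy : ∑ j ∈ J, (Ky j).ncard < N := by
      rw [← hN]
      rw [← Finset.add_sum_erase J _ hj0, ← Finset.add_sum_erase J (fun j => (K j).ncard) hj0]
      have h1 : (Ky j0).ncard = (K j0).ncard - 1 := by
        rw [hKydef, Function.update_self]
        exact Set.ncard_diff_singleton_of_mem hyK
      have h2 : ∑ j ∈ J.erase j0, (Ky j).ncard = ∑ j ∈ J.erase j0, (K j).ncard :=
        Finset.sum_congr rfl (fun j hj => by rw [hKyval j hj])
      omega
    by_cases hcx : ∀ J' ⊆ J, J'.card ≤ G.rho (⋃ j ∈ J', Kx j)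
    · obtain ⟨φ, h1, h2, h3, h4⟩ := ih _ hsumx Kx hcx rfl
      refine ⟨φ, fun j hj => ?_, h2, h3, h4⟩
      have hmem := h1 j hj
      by_cases hjj : j = j0
      · subst hjj
        rw [hKxdef, Function.update_self] at hmem
        exact hmem.1
      · rwa [hKxdef, Function.update_of_ne hjj] at hmem
    · by_cases hcy : ∀ J' ⊆ J, J'.card ≤ G.rho (⋃ j ∈ J', Ky j)
      · obtain ⟨φ, h1, h2, h3, h4⟩ := ih _ hsumy Ky hcy rfl
        refine ⟨φ, fun j hj => ?_, h2, h3, h4⟩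
        have hmem := h1 j hj
        by_cases hjj : j = j0
        · subst hjj
          rw [hKydef, Function.update_self] at hmem
          exact hmem.1
        · rwa [hKydef, Function.update_of_ne hjj] at hmem
      · -- contradiction via submodularity
        exfalso
        obtain ⟨Jx, hJxsub, hJxle⟩ := hdel x hxK Kx hKxdef hcx
        obtain ⟨Jy, hJysub, hJyle⟩ := hdel y hyK Ky hKydef hcy
        set Ax : Set E := (K j0 \ {x}) ∪ ⋃ j ∈ Jx, K j with hAx
        set Ay : Set E := (K j0 \ {y}) ∪ ⋃ j ∈ Jy, K j with hAy
        have hU : K j0 ∪ ⋃ j ∈ (Jx ∪ Jy), K j ⊆ Ax ∪ Ay := by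
          intro e he
          rcases he with he | he
          · by_cases hex : e = x
            · subst hex
              exact Or.inr (Or.inl ⟨he, fun h => hxyne (by simpa using h)⟩)
            · exact Or.inl (Or.inl ⟨he, by simpa using hex⟩)
          · simp only [Set.mem_iUnion, exists_prop] at he
            obtain ⟨j, hj, hje⟩ := he
            rcases Finset.mem_union.1 hj with hj | hj
            · exact Or.inl (Or.inr (Set.mem_biUnion hj hje))
            · exact Or.inr (Or.inr (Set.mem_biUnion hj hje))
        have hI : ⋃ j ∈ (Jx ∩ Jy), K j ⊆ Ax ∩ Ay := by
          intro e he
          simp only [Set.mem_iUnion, exists_prop] at he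
          obtain ⟨j, hj, hje⟩ := he
          exact ⟨Or.inr (Set.mem_biUnion (Finset.mem_of_mem_inter_left hj) hje),
            Or.inr (Set.mem_biUnion (Finset.mem_of_mem_inter_right hj) hje)⟩
        have hj0notx : j0 ∉ Jx := fun h => (Finset.mem_erase.1 (hJxsub h)).1 rfl
        have hj0noty : j0 ∉ Jy := fun h => (Finset.mem_erase.1 (hJysub h)).1 rfl
        have hins : (insert j0 (Jx ∪ Jy)) ⊆ J := by
          intro j hj
          rcases Finset.mem_insert.1 hj with rfl | hj
          · exact hj0
          · rcases Finset.mem_union.1 hj with hj | hj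
            · exact Finset.erase_subset j0 J (hJxsub hj)
            · exact Finset.erase_subset j0 J (hJysub hj)
        have hcond1 := hcond _ hins
        rw [Finset.set_biUnion_insert] at hcond1
        have hcard1 : (insert j0 (Jx ∪ Jy)).card = (Jx ∪ Jy).card + 1 :=
          Finset.card_insert_of_notMem (fun h => (Finset.mem_union.1 h).elim hj0notx hj0noty)
        have hcond2 := hcond (Jx ∩ Jy)
          (le_trans (le_trans Finset.inter_subset_left hJxsub) (Finset.erase_subset j0 J))
        have hm1 : G.rho (K j0 ∪ ⋃ j ∈ (Jx ∪ Jy), K j) ≤ G.rho (Ax ∪ Ay) := rho_mono hU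
        have hm2 : G.rho (⋃ j ∈ (Jx ∩ Jy), K j) ≤ G.rho (Ax ∩ Ay) := rho_mono hI
        have hsm := rho_submod (G := G) Ax Ay
        have hcards := Finset.card_union_add_card_inter Jx Jy
        omega
  · -- base case : all singletons
    push_neg at hbig
    have hKone : ∀ j ∈ J, ∃ a : E, K j = {a} := by
      intro j hj
      have h1 := hcond {j} (Finset.singleton_subset_iff.2 hj)
      rw [Finset.set_biUnion_singleton, Finset.card_singleton] at h1
      have hne : (K j).Nonempty := by
        rcases Set.eq_empty_or_nonempty (K j) with h | h
        · rw [h, rho_empty] at h1; omega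
        · exact h
      have h2 : (K j).ncard = 1 := by
        have h3 := hbig j hj
        have h4 := (Set.ncard_pos (Set.toFinite _)).2 hne
        omega
      exact Set.ncard_eq_one.1 h2
    set φ : ι → E := fun j => if h : (K j).Nonempty then h.choose else Classical.arbitrary E with hφ
    have hφmem : ∀ j ∈ J, φ j ∈ K j := by
      intro j hj
      have hne : (K j).Nonempty := by
        obtain ⟨a, ha⟩ := hKone j hj; rw [ha]; exact ⟨a, rfl⟩
      rw [hφ]
      simp only
      rw [dif_pos hne]
      exact hne.choose_spec
    have hKeq : ∀ j ∈ J, K j = {φ j} := by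
      intro j hj
      obtain ⟨a, ha⟩ := hKone j hj
      have hm := hφmem j hj
      rw [ha] at hm ⊢
      rw [Set.mem_singleton_iff.1 hm]
    have hinj : Set.InjOn φ ↑J := by
      intro j hj j' hj' heq
      by_contra hne
      have hsub : ({j, j'} : Finset ι) ⊆ J := by
        intro t ht
        rcases Finset.mem_insert.1 ht with rfl | ht
        · exact_mod_cast hj
        · exact_mod_cast (Finset.mem_singleton.1 ht) ▸ hj'
      have h2 := hcond {j, j'} hsub
      rw [Finset.card_insert_of_notMem (fun h => hne (Finset.mem_singleton.1 h))] at h2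
      have hrw : ⋃ t ∈ ({j, j'} : Finset ι), K t = {φ j} := by
        rw [Finset.set_biUnion_insert, Finset.set_biUnion_singleton,
          hKeq j (by exact_mod_cast hj), hKeq j' (by exact_mod_cast hj'), heq]
        simp
      rw [hrw] at h2
      have h3 := rho_le_ncard (G := G) {φ j}
      rw [Set.ncard_singleton] at h3
      rw [Finset.card_singleton] at h2
      omega
    have himg : φ '' ↑J = ⋃ j ∈ J, K j := by
      ext e
      simp only [Set.mem_image, Set.mem_iUnion, exists_prop]
      constructor
      · rintro ⟨j, hj, rfl⟩
        exact ⟨j, by exact_mod_cast hj, hφmem j (by exact_mod_cast hj)⟩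
      · rintro ⟨j, hj, hje⟩
        refine ⟨j, by exact_mod_cast hj, ?_⟩
        have hk := hKeq j hj
        rw [hk] at hje
        exact hje.symm
    have hncard : (φ '' ↑J).ncard = J.card := by
      rw [Set.ncard_image_of_injOn hinj, Set.ncard_coe_finset]
    refine ⟨φ, hφmem, hinj, ?_, hncard⟩
    have hlow := hcond J (le_refl J)
    rw [← himg] at hlow
    have hup := rho_le_ncard (G := G) (φ '' ↑J)
    omega

end Rado

end Multigraph

namespace Multigraph

open Finset

section Greedy

open scoped Classical

variable [Fintype V] [Fintype E]

/-- edges with an endpoint in A -/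
def EA (G : Multigraph V E) (A : Set V) : Set E := {e | ∃ a ∈ A, a ∈ G.inc e}

/-- A is independent -/
def Indep (G : Multigraph V E) (A : Set V) : Prop :=
  ∀ (e : E) (a b : V), G.inc e = s(a, b) → a ∈ A → b ∉ A

/-- A together with its neighbourhood -/
def UA (G : Multigraph V E) (A : Set V) : Set V := A ∪ {v | ∃ e ∈ G.EA A, v ∈ G.inc e}

variable {G : Multigraph V E}

lemma sym2_eq_of_mem {z : Sym2 V} {u v : V} (hu : u ∈ z) (hv : v ∈ z) (hne : u ≠ v) :
    z = s(u, v) := by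
  obtain ⟨x, y, hxy⟩ : ∃ x y, z = s(x, y) :=
    Sym2.ind (f := fun z => ∃ x y, z = s(x, y)) (fun x y => ⟨x, y, rfl⟩) z
  subst hxy
  rw [Sym2.mem_iff] at hu hv
  rcases hu with rfl | rfl <;> rcases hv with rfl | rfl
  · exact absurd rfl hne
  · rfl
  · exact Sym2.eq_swap.symm
  · exact absurd rfl hne

lemma EA_mono {A B : Set V} (h : A ⊆ B) : G.EA A ⊆ G.EA B := by
  rintro e ⟨a, ha, hae⟩; exact ⟨a, h ha, hae⟩

lemma UA_mono {A B : Set V} (h : A ⊆ B) : G.UA A ⊆ G.UA B := by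
  rintro v (hv | ⟨e, he, hve⟩)
  · exact Or.inl (h hv)
  · exact Or.inr ⟨e, EA_mono h he, hve⟩

lemma exists_indep (hconn : G.Connected) (hV : 1 < Fintype.card V) (w : V) (lam : Bool) :
    ∃ A : Set V, (w ∈ A ↔ lam = true) ∧ G.Indep A ∧ (∀ u v : V, G.ReachOn (G.EA A) u v) := by
  -- invariant
  set P : Set V → Prop := fun A => (w ∈ A ↔ lam = true) ∧ G.Indep A ∧ w ∈ G.UA A ∧
    (∀ u ∈ G.UA A, G.ReachOn (G.EA A) u w) with hP
  -- the inductive step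
  have main : ∀ (k : ℕ) (A : Set V), P A → ((G.UA A)ᶜ.ncard ≤ k) →
      ∃ A : Set V, (w ∈ A ↔ lam = true) ∧ G.Indep A ∧ (∀ u v : V, G.ReachOn (G.EA A) u v) := by
    intro k
    induction k with
    | zero =>
      intro A hPA hcard
      have hUA : G.UA A = Set.univ := by
        have : (G.UA A)ᶜ = ∅ := by
          rw [← Set.ncard_eq_zero (Set.toFinite _)]
          omega
        rw [← Set.compl_empty, ← this, compl_compl]
      refine ⟨A, hPA.1, hPA.2.1, fun u v => ?_⟩
      have hu := hPA.2.2.2 u (hUA ▸ Set.mem_univ u)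
      have hv := hPA.2.2.2 v (hUA ▸ Set.mem_univ v)
      exact hu.trans hv.symm
    | succ k ihk =>
      intro A hPA hcard
      by_cases hUA : G.UA A = Set.univ
      · refine ⟨A, hPA.1, hPA.2.1, fun u v => ?_⟩
        have hu := hPA.2.2.2 u (hUA ▸ Set.mem_univ u)
        have hv := hPA.2.2.2 v (hUA ▸ Set.mem_univ v)
        exact hu.trans hv.symm
      · obtain ⟨z, hz⟩ : ∃ z, z ∉ G.UA A := by
          by_contra h
          push_neg at h
          exact hUA (Set.eq_univ_of_forall h)
        obtain ⟨e0, -, a, b, hab, haU, hbU⟩ :=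
          exists_crossing (hconn.2 w z) (G.UA A) hPA.2.2.1 hz
        -- b is not adjacent to A
        have hnadj : ∀ (e : E), e ∈ G.EA A → b ∉ G.inc e := by
          intro e he hbe
          exact hbU (Or.inr ⟨e, he, hbe⟩)
        have hbA : b ∉ A := fun h => hbU (Or.inl h)
        set A' := insert b A with hA'
        have hsub : A ⊆ A' := Set.subset_insert b A
        have hwb : w ≠ b := fun h => hbU (h ▸ hPA.2.2.1)
        have hindep' : G.Indep A' := by
          intro e p q hpq hp hq
          rcases hp with rfl | hp
          · rcases hq with rfl | hq
            · exact G.loopless e (by rw [hpq]; exact Sym2.mk_isDiag_iff.2 rfl)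
            · refine hnadj e ⟨q, hq, ?_⟩ ?_
              · rw [hpq]; exact Sym2.mem_mk_right p q
              · rw [hpq]; exact Sym2.mem_mk_left p q
          · rcases hq with rfl | hq
            · refine hnadj e ⟨p, hp, ?_⟩ ?_
              · rw [hpq]; exact Sym2.mem_mk_left p q
              · rw [hpq]; exact Sym2.mem_mk_right p q
            · exact hPA.2.1 e p q hpq hp hq
        have he0 : e0 ∈ G.EA A' := ⟨b, Or.inl rfl, by rw [hab]; exact Sym2.mem_mk_right a b⟩
        have hreachb : G.ReachOn (G.EA A') b w := by
          have hba : G.AdjOn (G.EA A') b a := ⟨e0, he0, by rw [hab, Sym2.eq_swap]⟩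
          exact hba.reachOn.trans ((hPA.2.2.2 a haU).mono (EA_mono hsub))
        have hreach' : ∀ u ∈ G.UA A', G.ReachOn (G.EA A') u w := by
          rintro u (hu | ⟨e, ⟨a', ha', ha'e⟩, hue⟩)
          · rcases hu with rfl | hu
            · exact hreachb
            · exact (hPA.2.2.2 u (Or.inl hu)).mono (EA_mono hsub)
          · by_cases ha'b : a' = b
            · subst ha'b
              by_cases hub : u = a'
              · subst hub; exact hreachb
              · have hadj : G.AdjOn (G.EA A') u a' :=
                  ⟨e, ⟨a', Or.inl rfl, ha'e⟩, sym2_eq_of_mem hue ha'e hub⟩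
                exact hadj.reachOn.trans hreachb
            · have ha'A : a' ∈ A := by
                rcases ha' with h | h
                · exact absurd h ha'b
                · exact h
              exact (hPA.2.2.2 u (Or.inr ⟨e, ⟨a', ha'A, ha'e⟩, hue⟩)).mono (EA_mono hsub)
        have hP' : P A' := by
          refine ⟨?_, hindep', UA_mono hsub hPA.2.2.1, hreach'⟩
          rw [hA']
          constructor
          · rintro (rfl | hw)
            · exact absurd rfl hwb
            · exact hPA.1.1 hw
          · intro h
            exact Or.inr (hPA.1.2 h)
        have hmeas : (G.UA A')ᶜ.ncard ≤ k := by
          have hbU' : b ∈ G.UA A' := Or.inl (Or.inl rfl)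
          have hstrict : (G.UA A')ᶜ ⊂ (G.UA A)ᶜ := by
            refine ⟨Set.compl_subset_compl.2 (UA_mono hsub), fun h => ?_⟩
            exact (h (Set.mem_compl hbU)) hbU'
          have := Set.ncard_lt_ncard hstrict (Set.toFinite _)
          omega
        exact ihk A' hP' hmeas
  -- base cases
  have hlamcase : lam = false ∨ lam = true := by
    cases lam
    · exact Or.inl rfl
    · exact Or.inr rfl
  rcases hlamcase with hlam | hlam
  · -- lam = false : start from a neighbour of w
    obtain ⟨v0, hv0⟩ := Fintype.exists_ne_of_one_lt_card hV w
    obtain ⟨e0, -, a, b0, hab0, haU, hbU⟩ :=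
      exists_crossing (hconn.2 w v0) ({w} : Set V) rfl (fun h => hv0 h)
    have haw : a = w := haU
    rw [haw] at hab0
    have hb0w : b0 ≠ w := fun h => hbU (by rw [h]; exact rfl)
    have hb0inc : b0 ∈ G.inc e0 := by rw [hab0]; exact Sym2.mem_mk_right w b0
    have hwinc : w ∈ G.inc e0 := by rw [hab0]; exact Sym2.mem_mk_left w b0
    have he0EA : e0 ∈ G.EA ({b0} : Set V) := ⟨b0, rfl, hb0inc⟩
    have hb0wadj : G.AdjOn (G.EA ({b0} : Set V)) b0 w := ⟨e0, he0EA, by rw [hab0, Sym2.eq_swap]⟩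
    have hP0 : P {b0} := by
      refine ⟨?_, ?_, ?_, ?_⟩
      · rw [hlam]
        constructor
        · intro h
          exact absurd ((Set.mem_singleton_iff.1 h).symm) hb0w
        · intro h
          exact absurd h (by simp)
      · intro e p q hpq hp hq
        have hp' : p = b0 := hp
        have hq' : q = b0 := hq
        exact G.loopless e (by rw [hpq, hp', hq']; exact Sym2.mk_isDiag_iff.2 rfl)
      · exact Or.inr ⟨e0, he0EA, hwinc⟩
      · rintro u (hu | ⟨e, ⟨a', ha', ha'e⟩, hue⟩)
        · have hub : u = b0 := hu
          subst hub
          exact hb0wadj.reachOn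
        · have ha'b : a' = b0 := ha'
          subst ha'b
          by_cases hu : u = a'
          · subst hu; exact hb0wadj.reachOn
          · have hadj : G.AdjOn (G.EA ({a'} : Set V)) u a' :=
              ⟨e, ⟨a', rfl, ha'e⟩, sym2_eq_of_mem hue ha'e hu⟩
            exact hadj.reachOn.trans hb0wadj.reachOn
    exact main _ {b0} hP0 (le_refl _)
  · -- lam = true : start from {w}
    have hP0 : P {w} := by
      refine ⟨by rw [hlam]; simp, ?_, Or.inl rfl, ?_⟩
      · intro e p q hpq hp hq
        have hp' : p = w := hp
        have hq' : q = w := hq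
        exact G.loopless e (by rw [hpq, hp', hq']; exact Sym2.mk_isDiag_iff.2 rfl)
      · rintro u (hu | ⟨e, ⟨a', ha', ha'e⟩, hue⟩)
        · have huw : u = w := hu
          subst huw
          exact ReachOn.refl u
        · have ha'w : a' = w := ha'
          subst ha'w
          by_cases hu : u = a'
          · subst hu; exact ReachOn.refl u
          · have hadj : G.AdjOn (G.EA ({a'} : Set V)) u a' :=
              ⟨e, ⟨a', rfl, ha'e⟩, sym2_eq_of_mem hue ha'e hu⟩
            exact hadj.reachOn
    exact main _ {w} hP0 (le_refl _)

end Greedy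

end Multigraph

namespace Multigraph

open Finset

section Counting

open scoped Classical

variable [Fintype V] [Fintype E] {G : Multigraph V E}

lemma degree_eq_card (v : V) :
    G.degree v = (Finset.univ.filter (fun e => v ∈ G.inc e)).card := by
  unfold degree degOn
  rw [show {e ∈ Set.univ | v ∈ G.inc e} = (↑(Finset.univ.filter (fun e => v ∈ G.inc e)) : Set E) by
    ext e; simp]
  exact Set.ncard_coe_finset _

lemma degree_le_maxDegree (v : V) : G.degree v ≤ G.maxDegree :=
  Finset.le_sup (Finset.mem_univ v)

/-- pointwise equality from sum equality -/
lemma sum_pointwise_eq {α : Type} {s : Finset α} {f g : α → ℕ}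
    (hle : ∀ i ∈ s, f i ≤ g i) (hsum : ∑ i ∈ s, g i ≤ ∑ i ∈ s, f i) :
    ∀ i ∈ s, f i = g i := by
  intro i hi
  refine le_antisymm (hle i hi) ?_
  by_contra hlt
  push_neg at hlt
  have := Finset.sum_lt_sum hle ⟨i, hi, hlt⟩
  omega

/-- The key counting bound. -/
lemma rho_edge_bound (hG : ¬ (G.IsRegular ∧ G.IsBipartite)) (hconn : G.Connected)
    {A : Set V} (hindep : G.Indep A) (hΔ : 1 ≤ G.maxDegree)
    (Df : Finset V) (hDf : ∀ d ∈ Df, d ∈ A ∧ G.degree d = G.maxDegree) :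
    2 * Df.card ≤ G.rho {e | ∃ d ∈ Df, d ∈ G.inc e} := by
  set Δ := G.maxDegree with hΔdef
  set X : Set E := {e | ∃ d ∈ Df, d ∈ G.inc e} with hX
  have hDfA : ∀ d ∈ Df, d ∈ A := fun d hd => (hDf d hd).1
  -- per-class bound
  have hclass : ∀ K ∈ G.CF X, 2 * (K ∩ Df).card + 1 ≤ K.card := by
    intro K hK
    obtain ⟨r, rfl⟩ := mem_CF.1 hK
    set K := G.compF X r with hKdef
    by_cases hKD : (K ∩ Df).card = 0
    · rw [hKD]
      exact Finset.card_pos.2 ⟨r, self_mem_compF r⟩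
    · set KD : Finset V := K ∩ Df with hKDdef
      set KB : Finset V := K \ Df with hKBdef
      -- edges incident to KD
      set Es : Finset E := Finset.univ.filter (fun e => ∃ d ∈ KD, d ∈ G.inc e) with hEs
      have hEsX : ∀ e ∈ Es, e ∈ X := by
        intro e he
        obtain ⟨d, hd, hde⟩ := (Finset.mem_filter.1 he).2
        exact ⟨d, (Finset.mem_inter.1 hd).2, hde⟩
      set dEnd : E → V := fun e => if h : ∃ d ∈ KD, d ∈ G.inc e then h.choose else r with hdEnd
      have hdspec : ∀ e ∈ Es, dEnd e ∈ KD ∧ dEnd e ∈ G.inc e := by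
        intro e he
        have h := (Finset.mem_filter.1 he).2
        rw [hdEnd]
        simp only [dif_pos h]
        exact h.choose_spec
      -- fibers of dEnd
      have hfiber1 : ∀ d ∈ KD, Es.filter (fun e => dEnd e = d) =
          Finset.univ.filter (fun e => d ∈ G.inc e) := by
        intro d hd
        apply Finset.ext
        intro e
        simp only [Finset.mem_filter, Finset.mem_univ, true_and]
        constructor
        · rintro ⟨he, hde⟩
          rw [← hde]
          exact (hdspec e he).2
        · intro hde
          have heEs : e ∈ Es := Finset.mem_filter.2 ⟨Finset.mem_univ e, ⟨d, hd, hde⟩⟩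
          refine ⟨heEs, ?_⟩
          obtain ⟨hd', hd'e⟩ := hdspec e heEs
          by_contra hne
          have hinc : G.inc e = s(d, dEnd e) := sym2_eq_of_mem hde hd'e (fun h => hne h.symm)
          have : dEnd e ∉ A := hindep e d (dEnd e) hinc (hDfA d (Finset.mem_inter.1 hd).2)
          exact this (hDfA _ (Finset.mem_inter.1 hd').2)
      have hcount1 : Es.card = KD.card * Δ := by
        have h1 : Es.card = ∑ d ∈ KD, (Es.filter (fun e => dEnd e = d)).card :=
          Finset.card_eq_sum_card_fiberwise (fun e he => (hdspec e he).1)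
        rw [h1]
        rw [Finset.sum_congr rfl (fun d hd => by
          rw [hfiber1 d hd, ← degree_eq_card, (hDf d (Finset.mem_inter.1 hd).2).2])]
        rw [Finset.sum_const, smul_eq_mul]
      -- other ends
      set bEnd : E → V := fun e =>
        if h : ∃ b, b ∈ G.inc e ∧ b ∈ K ∧ b ∉ A ∧ b ≠ dEnd e then h.choose else r with hbEnd
      have hbex : ∀ e ∈ Es, ∃ b, b ∈ G.inc e ∧ b ∈ K ∧ b ∉ A ∧ b ≠ dEnd e := by
        intro e he
        obtain ⟨hd, hde⟩ := hdspec e he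
        obtain ⟨x, y, hxy, hincxy⟩ := G.exists_endpoints e
        have hdmem : dEnd e ∈ G.inc e := hde
        have hdK : dEnd e ∈ K := (Finset.mem_inter.1 hd).1
        have hdA : dEnd e ∈ A := hDfA _ (Finset.mem_inter.1 hd).2
        rw [hincxy, Sym2.mem_iff] at hdmem
        rcases hdmem with hdx | hdy
        · refine ⟨y, by rw [hincxy]; exact Sym2.mem_mk_right x y, ?_, ?_, ?_⟩
          · exact compF_closed hdK (hEsX e he) hde (by rw [hincxy]; exact Sym2.mem_mk_right x y)
          · refine hindep e (dEnd e) y ?_ hdA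
            rw [hincxy, hdx]
          · rw [← hdx] at hxy
            exact fun h => hxy (h ▸ rfl)
        · refine ⟨x, by rw [hincxy]; exact Sym2.mem_mk_left x y, ?_, ?_, ?_⟩
          · exact compF_closed hdK (hEsX e he) hde (by rw [hincxy]; exact Sym2.mem_mk_left x y)
          · refine hindep e (dEnd e) x ?_ hdA
            rw [hincxy, hdy, Sym2.eq_swap]
          · rw [← hdy] at hxy
            exact fun h => hxy (h ▸ rfl)
      have hbspec : ∀ e ∈ Es, bEnd e ∈ G.inc e ∧ bEnd e ∈ K ∧ bEnd e ∉ A ∧ bEnd e ≠ dEnd e := by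
        intro e he
        have h := hbex e he
        rw [hbEnd]
        simp only [dif_pos h]
        exact h.choose_spec
      have hbKB : ∀ e ∈ Es, bEnd e ∈ KB := by
        intro e he
        obtain ⟨h1, h2, h3, h4⟩ := hbspec e he
        exact Finset.mem_sdiff.2 ⟨h2, fun h => h3 (hDfA _ h)⟩
      have hbinc : ∀ e ∈ Es, G.inc e = s(dEnd e, bEnd e) := by
        intro e he
        obtain ⟨h1, h2, h3, h4⟩ := hbspec e he
        exact sym2_eq_of_mem (hdspec e he).2 h1 (Ne.symm h4)
      have hcount2 : Es.card = ∑ b ∈ KB, (Es.filter (fun e => bEnd e = b)).card :=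
        Finset.card_eq_sum_card_fiberwise (fun e he => hbKB e he)
      have hfibsub : ∀ b ∈ KB, (Es.filter (fun e => bEnd e = b)) ⊆
          Finset.univ.filter (fun e => b ∈ G.inc e) := by
        intro b hb e he
        obtain ⟨he1, he2⟩ := Finset.mem_filter.1 he
        refine Finset.mem_filter.2 ⟨Finset.mem_univ e, ?_⟩
        rw [← he2]
        exact (hbspec e he1).1
      have hfible : ∀ b ∈ KB, (Es.filter (fun e => bEnd e = b)).card ≤ G.degree b := by
        intro b hb
        rw [degree_eq_card]
        exact Finset.card_le_card (hfibsub b hb)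
      have hchain : KD.card * Δ ≤ ∑ b ∈ KB, G.degree b := by
        rw [← hcount1, hcount2]
        exact Finset.sum_le_sum hfible
      have hchain2 : ∑ b ∈ KB, G.degree b ≤ KB.card * Δ := by
        calc ∑ b ∈ KB, G.degree b ≤ ∑ _b ∈ KB, Δ :=
          Finset.sum_le_sum (fun b _ => degree_le_maxDegree b)
        _ = KB.card * Δ := by rw [Finset.sum_const, smul_eq_mul]
      have hKcard : K.card = KD.card + KB.card := by
        rw [hKDdef, hKBdef]
        exact (Finset.card_inter_add_card_sdiff K Df).symm
      by_cases hlt : KD.card < KB.card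
      · omega
      · -- equality case : contradiction with hG
        exfalso
        have heqc : KB.card = KD.card := by
          have hmul : KD.card * Δ ≤ KB.card * Δ := le_trans hchain hchain2
          have h2 : KD.card ≤ KB.card := Nat.le_of_mul_le_mul_right hmul (by omega)
          omega
        have hsumeq : ∑ b ∈ KB, G.degree b = KB.card * Δ := by
          have : KB.card * Δ ≤ ∑ b ∈ KB, G.degree b := by rw [heqc]; exact hchain
          omega
        -- every b in KB has degree Δ
        have hdegb : ∀ b ∈ KB, G.degree b = Δ := by
          intro b hb
          by_contra hne
          have hlt : G.degree b < Δ := lt_of_le_of_ne (degree_le_maxDegree b) hne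
          have hsl := Finset.sum_lt_sum (s := KB) (f := fun c => G.degree c) (g := fun _ => Δ)
            (fun c _ => degree_le_maxDegree c) ⟨b, hb, hlt⟩
          rw [Finset.sum_const, smul_eq_mul] at hsl
          omega
        -- fibers are full
        have hfibeq : ∀ b ∈ KB, (Es.filter (fun e => bEnd e = b)) =
            Finset.univ.filter (fun e => b ∈ G.inc e) := by
          intro b hb
          refine Finset.eq_of_subset_of_card_le (hfibsub b hb) ?_
          by_contra hlt
          push_neg at hlt
          have hsl := Finset.sum_lt_sum (s := KB)
            (f := fun c => (Es.filter (fun e => bEnd e = c)).card)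
            (g := fun c => (Finset.univ.filter (fun e => c ∈ G.inc e)).card)
            (fun c hc => Finset.card_le_card (hfibsub c hc)) ⟨b, hb, hlt⟩
          have h1 : ∑ c ∈ KB, (Finset.univ.filter (fun e => c ∈ G.inc e)).card =
              ∑ c ∈ KB, G.degree c :=
            Finset.sum_congr rfl (fun c _ => (degree_eq_card c).symm)
          rw [h1, hsumeq, heqc, ← hcount1, hcount2] at hsl
          exact lt_irrefl _ hsl
        -- every edge at any b ∈ KB goes back to KD
        have hback : ∀ b ∈ KB, ∀ e : E, b ∈ G.inc e →
            (dEnd e ∈ KD ∧ G.inc e = s(dEnd e, b)) := by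
          intro b hb e hbe
          have : e ∈ Es.filter (fun e => bEnd e = b) := by
            rw [hfibeq b hb]
            exact Finset.mem_filter.2 ⟨Finset.mem_univ e, hbe⟩
          obtain ⟨he1, he2⟩ := Finset.mem_filter.1 this
          exact ⟨(hdspec e he1).1, by rw [hbinc e he1, he2]⟩
        -- K is closed
        have hclosed : ∀ u ∈ (↑K : Set V), ∀ (e : E) (p q : V),
            G.inc e = s(p, q) → p = u → q ∈ (↑K : Set V) := by
          intro u hu e p q hpq hp
          rw [hp] at hpq
          have huK : u ∈ K := hu
          by_cases huDf : u ∈ Df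
          · have heX : e ∈ X := ⟨u, huDf, by rw [hpq]; exact Sym2.mem_mk_left u q⟩
            exact compF_closed huK heX (by rw [hpq]; exact Sym2.mem_mk_left u q)
              (by rw [hpq]; exact Sym2.mem_mk_right u q)
          · have huKB : u ∈ KB := Finset.mem_sdiff.2 ⟨huK, huDf⟩
            obtain ⟨hd, hinc⟩ := hback u huKB e (by rw [hpq]; exact Sym2.mem_mk_left u q)
            have heq2 : s(u, q) = s(dEnd e, u) := by rw [← hpq, hinc]
            rcases Sym2.eq_iff.1 heq2 with ⟨h1, h2⟩ | ⟨h1, h2⟩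
            · show q ∈ K
              rw [h2]
              exact huK
            · show q ∈ K
              rw [h2]
              exact (Finset.mem_inter.1 hd).1
          
        -- K is everything
        have hKuniv : ∀ v : V, v ∈ K := by
          intro v
          exact mem_of_closed hclosed (hconn.2 r v) (self_mem_compF r)
        -- regularity
        have hreg : G.IsRegular := by
          refine ⟨Δ, fun v => ?_⟩
          by_cases hv : v ∈ Df
          · exact (hDf v hv).2
          · exact hdegb v (Finset.mem_sdiff.2 ⟨hKuniv v, hv⟩)
        -- bipartiteness
        have hbip : G.IsBipartite := by
          refine ⟨fun v => decide (v ∈ Df), ?_⟩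
          intro e _ p q hpq
          by_cases hp : p ∈ Df
          · have hq : q ∉ Df := by
              intro hq
              exact hindep e p q hpq (hDfA p hp) (hDfA q hq)
            simp [hp, hq]
          · have hpKB : p ∈ KB := Finset.mem_sdiff.2 ⟨hKuniv p, hp⟩
            obtain ⟨hd, hinc⟩ := hback p hpKB e (by rw [hpq]; exact Sym2.mem_mk_left p q)
            have heq2 : s(p, q) = s(dEnd e, p) := by rw [← hpq, hinc]
            rcases Sym2.eq_iff.1 heq2 with ⟨h1, h2⟩ | ⟨h1, h2⟩
            · refine absurd hd (fun hc => hp ?_)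
              rw [h1]
              exact (Finset.mem_inter.1 hc).2
            · have hq : q ∈ Df := by
                rw [h2]
                exact (Finset.mem_inter.1 hd).2
              simp [hp, hq]
        exact hG ⟨hreg, hbip⟩
  -- summing up
  have hsum1 := sum_CF_card (G := G) X
  have hsum2 := sum_CF_inter_card (G := G) X Df
  have hsum3 : ∑ K ∈ G.CF X, (2 * (K ∩ Df).card + 1) ≤ ∑ K ∈ G.CF X, K.card :=
    Finset.sum_le_sum hclass
  rw [Finset.sum_add_distrib, Finset.sum_const, ← Finset.mul_sum, hsum2, smul_eq_mul, mul_one]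
    at hsum3
  unfold rho
  omega

end Counting

end Multigraph


/-- Every 2-edge-connected multigraph `G` that is not a regular
bipartite graph has, for every vertex `w` and every `lam ∈ {0,1}` (here `false`
encodes type 0 and `true` encodes type 1), a spanning weakly even
`(w, lam)`-tree: a spanning tree `T` (with edge set `S`) such that in the
bipartition `c` of `T` in which `w` has type `lam`, every leaf of `T` whose
degree in `G` equals `Δ(G)` has type 0. -/
theorem spanning_weakly_even_tree_of_twoEdgeConnected {V E : Type} [Fintype V] [Fintype E]
    (G : Multigraph V E) (h2ec : G.TwoEdgeConnected)
    (hG : ¬ (G.IsRegular ∧ G.IsBipartite)) (w : V) (lam : Bool) :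
    ∃ (S : Set E) (c : V → Bool),
      G.IsTree Set.univ S ∧
      G.ProperOn S c ∧
      c w = lam ∧
      ∀ v : V, G.IsLeaf S v → G.degree v = G.maxDegree → c v = false := by
  classical
  haveI hNV : Nonempty V := h2ec.1.1
  open Multigraph in
  by_cases hV1 : Fintype.card V ≤ 1
  · -- single vertex case
    have hsub : ∀ u v : V, u = v := fun u v => Fintype.card_le_one_iff.1 hV1 u v
    refine ⟨∅, fun _ => lam, ⟨⟨Classical.arbitrary V, trivial⟩,
      fun e he v hv => (Set.notMem_empty e he).elim,
      fun u _ v _ => by rw [hsub u v]; exact Multigraph.ReachOn.refl v,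
      ?_⟩, fun e he => (Set.notMem_empty e he).elim, rfl, ?_⟩
    · rw [Set.ncard_empty, Set.ncard_univ, Nat.card_eq_fintype_card]
      have := Fintype.card_pos (α := V)
      omega
    · intro v hleaf _
      exfalso
      have hempty : {e ∈ (∅ : Set E) | v ∈ G.inc e} = ∅ := by ext e; simp
      have h1 : G.degOn ∅ v = 1 := hleaf
      unfold Multigraph.degOn at h1
      rw [hempty, Set.ncard_empty] at h1
      omega
  · push_neg at hV1
    -- there is an edge at w
    obtain ⟨v0, hv0⟩ := Fintype.exists_ne_of_one_lt_card hV1 w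
    obtain ⟨e0, -, a0, b0, hab, haU, hbU⟩ :=
      Multigraph.exists_crossing (h2ec.1.2 w v0) ({w} : Set V) rfl (fun h => hv0 h)
    haveI : Nonempty E := ⟨e0⟩
    have haw : a0 = w := haU
    have hΔ1 : 1 ≤ G.maxDegree := by
      have h1 : 1 ≤ G.degree w := by
        rw [Multigraph.degree_eq_card]
        refine Finset.card_pos.2 ⟨e0, Finset.mem_filter.2 ⟨Finset.mem_univ _, ?_⟩⟩
        rw [hab, haw]
        exact Sym2.mem_mk_left w b0
      exact le_trans h1 (Multigraph.degree_le_maxDegree w)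
    obtain ⟨A, hwA, hindep, hAconn⟩ := Multigraph.exists_indep h2ec.1 hV1 w lam
    set Df : Finset V := Finset.univ.filter (fun v => v ∈ A ∧ G.degree v = G.maxDegree)
      with hDfdef
    set J : Finset (V × Bool) := Df ×ˢ Finset.univ with hJ
    set Ks : V × Bool → Set E := fun p => {e | p.1 ∈ G.inc e} with hKs
    have hcond : ∀ J' ⊆ J, J'.card ≤ G.rho (⋃ j ∈ J', Ks j) := by
      intro J' hJ'
      set D2 : Finset V := J'.image Prod.fst with hD2
      have hsub2 : ∀ d ∈ D2, d ∈ A ∧ G.degree d = G.maxDegree := by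
        intro d hd
        obtain ⟨p, hp, rfl⟩ := Finset.mem_image.1 hd
        have h1 := hJ' hp
        rw [hJ] at h1
        have h2 := (Finset.mem_product.1 h1).1
        exact (Finset.mem_filter.1 h2).2
      have hU : ⋃ j ∈ J', Ks j = {e | ∃ d ∈ D2, d ∈ G.inc e} := by
        ext e
        simp only [Set.mem_iUnion, exists_prop, Set.mem_setOf_eq, hKs, hD2, Finset.mem_image]
        constructor
        · rintro ⟨j, hj, hje⟩
          exact ⟨j.1, ⟨j, hj, rfl⟩, hje⟩
        · rintro ⟨d, ⟨j, hj, rfl⟩, hde⟩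
          exact ⟨j, hj, hde⟩
      have hbound := Multigraph.rho_edge_bound hG h2ec.1 hindep hΔ1 D2 hsub2
      rw [hU]
      have hcard : J'.card ≤ 2 * D2.card := by
        have hsub3 : J' ⊆ D2 ×ˢ (Finset.univ : Finset Bool) := by
          intro p hp
          exact Finset.mem_product.2 ⟨Finset.mem_image_of_mem Prod.fst hp, Finset.mem_univ _⟩
        calc J'.card ≤ (D2 ×ˢ (Finset.univ : Finset Bool)).card := Finset.card_le_card hsub3
        _ = D2.card * 2 := by rw [Finset.card_product, Finset.card_univ, Fintype.card_bool]
        _ = 2 * D2.card := Nat.mul_comm _ _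
      omega
    obtain ⟨φ, hφmem, hφinj, hφrho, hφncard⟩ := Multigraph.rado (G := G) J Ks hcond
    set F : Set E := φ '' ↑J with hF
    have hFEA : F ⊆ G.EA A := by
      rintro e ⟨j, hj, rfl⟩
      have hj' : j ∈ J := by exact_mod_cast hj
      have hmem := hφmem j hj'
      have hj1 : j.1 ∈ A := by
        rw [hJ] at hj'
        have h2 := (Finset.mem_product.1 hj').1
        exact (Finset.mem_filter.1 h2).2.1
      exact ⟨j.1, hj1, hmem⟩
    obtain ⟨S, hFS, hSEA, htree⟩ := Multigraph.exists_spanning_tree_extending (G.EA A) F hFEA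
      hAconn (by rw [hF, hφrho, hφncard])
    refine ⟨S, fun v => decide (v ∈ A), htree, ?_, ?_, ?_⟩
    · -- properness
      intro e heS p q hpq
      obtain ⟨a', ha'A, ha'e⟩ := hSEA heS
      rw [hpq, Sym2.mem_iff] at ha'e
      rcases ha'e with h | h
      · have hpA : p ∈ A := h ▸ ha'A
        have hqA : q ∉ A := hindep e p q hpq hpA
        simp [hpA, hqA]
      · have hqA : q ∈ A := h ▸ ha'A
        have hpA : p ∉ A := hindep e q p (by rw [hpq, Sym2.eq_swap]) hqA
        simp [hpA, hqA]
    · -- colour of w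
      revert hwA
      cases lam
      · intro hwA
        have hw : w ∉ A := fun h => by simpa using hwA.1 h
        simp [hw]
      · intro hwA
        have hw : w ∈ A := hwA.2 rfl
        simp [hw]
    · -- leaves of maximum degree
      intro v hleaf hdeg
      by_contra hcv
      have hvA : v ∈ A := by simpa using hcv
      have hvDf : v ∈ Df := Finset.mem_filter.2 ⟨Finset.mem_univ v, hvA, hdeg⟩
      have hj1 : (v, false) ∈ J := Finset.mem_product.2 ⟨hvDf, Finset.mem_univ _⟩
      have hj2 : (v, true) ∈ J := Finset.mem_product.2 ⟨hvDf, Finset.mem_univ _⟩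
      have hne : φ (v, false) ≠ φ (v, true) := by
        intro h
        have := hφinj (by exact_mod_cast hj1) (by exact_mod_cast hj2) h
        simp at this
      have hmem1 : φ (v, false) ∈ {e ∈ S | v ∈ G.inc e} :=
        ⟨hFS ⟨(v, false), by exact_mod_cast hj1, rfl⟩, hφmem _ hj1⟩
      have hmem2 : φ (v, true) ∈ {e ∈ S | v ∈ G.inc e} :=
        ⟨hFS ⟨(v, true), by exact_mod_cast hj2, rfl⟩, hφmem _ hj2⟩
      have h2 : 1 < {e ∈ S | v ∈ G.inc e}.ncard :=
        (Set.one_lt_ncard (Set.toFinite _)).2 ⟨_, hmem1, _, hmem2, hne⟩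
      have h1 : G.degOn S v = 1 := hleaf
      unfold Multigraph.degOn at h1
      omega
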